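/- (Uniqueness of shortest curves for strictly convex distance functions.) Let V be a normed real vector space that is a strictly convex space (StrictConvexSpace ℝ V), let p, q ∈ V, and let γ : ℝ → V be continuous on Set.Icc 0 1 with γ 0 = p, γ 1 = q, and total variation eVariationOn γ (Set.Icc 0 1) = ENNReal.ofReal ‖p − q‖. Then the image γ '' (Set.Icc 0 1) equals the closed segment segment ℝ p q. -/

import Mathlib

/-- Uniqueness of shortest curves for strictly convex distance functions:
a curve from `p` to `q` whose length (total variation on `[0,1]`) equals `‖p - q‖`
traces out exactly the line segment from `p` to `q`. -/
theorem shortest_curve_eq_segment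
    {V : Type*} [NormedAddCommGroup V] [NormedSpace ℝ V] [StrictConvexSpace ℝ V]
    (p q : V) (γ : ℝ → V) (hcont : ContinuousOn γ (Set.Icc 0 1))
    (h0 : γ 0 = p) (h1 : γ 1 = q)
    (hlen : eVariationOn γ (Set.Icc 0 1) = ENNReal.ofReal ‖p - q‖) :
    γ '' Set.Icc 0 1 = segment ℝ p q := by
  -- Step 1: the image is contained in the segment.
  have hsub : γ '' Set.Icc 0 1 ⊆ segment ℝ p q := by
    rintro _ ⟨t, ht, rfl⟩
    have hsplit : eVariationOn γ (Set.Icc 0 1 ∩ Set.Icc 0 t)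
        + eVariationOn γ (Set.Icc 0 1 ∩ Set.Icc t 1)
        = eVariationOn γ (Set.Icc 0 1 ∩ Set.Icc 0 1) :=
      eVariationOn.Icc_add_Icc γ ht.1 ht.2 ht
    rw [Set.inter_self] at hsplit
    have h1' : edist (γ 0) (γ t) ≤ eVariationOn γ (Set.Icc 0 1 ∩ Set.Icc 0 t) :=
      eVariationOn.edist_le γ ⟨Set.left_mem_Icc.2 zero_le_one, Set.left_mem_Icc.2 ht.1⟩
        ⟨ht, Set.right_mem_Icc.2 ht.1⟩
    have h2' : edist (γ t) (γ 1) ≤ eVariationOn γ (Set.Icc 0 1 ∩ Set.Icc t 1) :=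
      eVariationOn.edist_le γ ⟨ht, Set.left_mem_Icc.2 ht.2⟩
        ⟨Set.right_mem_Icc.2 zero_le_one, Set.right_mem_Icc.2 ht.2⟩
    rw [h0] at h1'
    rw [h1] at h2'
    have hle : edist p (γ t) + edist (γ t) q ≤ ENNReal.ofReal ‖p - q‖ := by
      rw [← hlen, ← hsplit]
      exact add_le_add h1' h2'
    have hle' : dist p (γ t) + dist (γ t) q ≤ dist p q := by
      have := hle
      rw [edist_dist, edist_dist, ← ENNReal.ofReal_add dist_nonneg dist_nonneg,
        ← dist_eq_norm] at this
      exact (ENNReal.ofReal_le_ofReal_iff dist_nonneg).1 this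
    have heq : dist p (γ t) + dist (γ t) q = dist p q :=
      le_antisymm hle' (dist_triangle p (γ t) q)
    rw [mem_segment_iff_wbtw, ← dist_add_dist_eq_iff]
    exact heq
  refine le_antisymm hsub ?_
  rcases eq_or_ne p q with rfl | hpq
  · rw [segment_same]
    exact Set.singleton_subset_iff.2 ⟨0, Set.left_mem_Icc.2 zero_le_one, h0⟩
  -- Step 2: p ≠ q. Use a dual functional.
  have hd : q - p ≠ 0 := sub_ne_zero.2 (Ne.symm hpq)
  obtain ⟨f, hf1, hf2⟩ := exists_dual_vector ℝ (q - p) (norm_ne_zero_iff.2 hd)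
  have hfd : f q - f p = ‖q - p‖ := by rw [← map_sub]; exact hf2
  have hlt : f p < f q := by
    have : (0 : ℝ) < ‖q - p‖ := norm_pos_iff.2 hd
    linarith
  -- the image of the curve under f is a connected set containing f p and f q
  have hconn : IsPreconnected (f '' (γ '' Set.Icc 0 1)) :=
    (isPreconnected_Icc.image γ hcont).image f f.continuous.continuousOn
  have hIcc : Set.Icc (f p) (f q) ⊆ f '' (γ '' Set.Icc 0 1) := by
    apply hconn.Icc_subset
    · exact ⟨p, ⟨0, Set.left_mem_Icc.2 zero_le_one, h0⟩, rfl⟩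
    · exact ⟨q, ⟨1, Set.right_mem_Icc.2 zero_le_one, h1⟩, rfl⟩
  rintro x hx
  obtain ⟨a, b, ha, hb, hab, rfl⟩ := hx
  have hfx : f (a • p + b • q) ∈ Set.Icc (f p) (f q) := by
    simp only [map_add, map_smul, smul_eq_mul]
    have ha' : a = 1 - b := by linarith
    have hb' : b = 1 - a := by linarith
    constructor
    · rw [ha']
      nlinarith [mul_nonneg hb (sub_nonneg.2 hlt.le)]
    · rw [hb']
      nlinarith [mul_nonneg ha (sub_nonneg.2 hlt.le)]
  obtain ⟨y, hy, hfs⟩ := hIcc hfx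
  obtain ⟨s, hs, rfl⟩ := hy
  have hγs : γ s ∈ segment ℝ p q := hsub ⟨s, hs, rfl⟩
  obtain ⟨c, d, hc, hd', hcd, hγseq⟩ := hγs
  -- from f (γ s) = f x deduce γ s = x
  have : γ s = a • p + b • q := by
    have hf' : f (γ s) = f (a • p + b • q) := hfs
    rw [← hγseq] at hf' ⊢
    have h1 : c * f p + d * f q = a * f p + b * f q := by
      simpa [map_add, map_smul, smul_eq_mul] using hf'
    have key : (d - b) * (f q - f p) = 0 := by
      linear_combination h1 + (hab - hcd) * f p
    have hbd : b = d := by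
      rcases mul_eq_zero.1 key with h | h
      · linarith
      · exact absurd (by linarith : f p = f q) hlt.ne
    have hac : a = c := by linarith
    rw [hac, hbd]
  exact ⟨s, hs, this⟩
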